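/- Let (X, 𝒜) be a measurable space, let 𝒴 = {−1, 1}, let D be a probability measure on X × 𝒴, and let F be a nonempty countable set of measurable functions f : X → [−1, 1]. Let ℓ : [−1,1] × 𝒴 → [0,1] be γ-Lipschitz in its first argument for every fixed label. Suppose there is a measurable coloring κ : X → {1,…,p} such that every f ∈ F is constant on the fibers of κ (f(x) = f(x') whenever κ(x) = κ(x')). Then for every δ > 0, with probability at least 1 − δ over an i.i.d. sample S = ((x_1,y_1),…,(x_m,y_m)) drawn from D^m, every f ∈ F satisfies L(f) ≤ L_S(f) + 2γ·√(p/m) + 3√(ln(2/δ)/(2m)), where L_S(f) = (1/m) Σ_{i=1}^m ℓ(f(x_i), y_i) and L(f) = E_{(x,y)∼D}[ℓ(f(x), y)]. -/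

import Mathlib

open Finset MeasureTheory

open Real

lemma hoeff_aux (q : ℝ) (hq0 : 0 ≤ q) (hq1 : q ≤ 1) :
    ∀ x : ℝ, 0 ≤ x → q * x + Real.log (1 - q + q * Real.exp (-x)) ≤ x ^ 2 / 8 := by
  set u : ℝ → ℝ := fun t => 1 - q + q * Real.exp (-t) with hu_def
  have hu_pos : ∀ t, 0 < u t := by
    intro t
    rcases eq_or_lt_of_le hq0 with h | h
    · simp [hu_def, ← h]
    · have : 0 < q * Real.exp (-t) := mul_pos h (Real.exp_pos _)
      have : 0 ≤ 1 - q := by linarith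
      simp only [hu_def]
      positivity
  have hu_deriv : ∀ t, HasDerivAt u (-(q * Real.exp (-t))) t := by
    intro t
    have h1 : HasDerivAt (fun t : ℝ => Real.exp (-t)) (-Real.exp (-t)) t := by
      exact ((Real.hasDerivAt_exp (-t)).comp t (hasDerivAt_neg t)).congr_deriv (by ring)
    have := (h1.const_mul q).const_add (1 - q)
    exact this.congr_deriv (by ring)
  set ψ : ℝ → ℝ := fun t => q - q * Real.exp (-t) / u t with hψ_def
  have hψ_deriv : ∀ t, HasDerivAt ψ
      ((q * Real.exp (-t) / u t) * (1 - q * Real.exp (-t) / u t)) t := by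
    intro t
    have h1 : HasDerivAt (fun t : ℝ => q * Real.exp (-t)) (-(q * Real.exp (-t))) t := by
      have h2 : HasDerivAt (fun t : ℝ => Real.exp (-t)) (-Real.exp (-t)) t := by
        exact ((Real.hasDerivAt_exp (-t)).comp t (hasDerivAt_neg t)).congr_deriv (by ring)
      exact (h2.const_mul q).congr_deriv (by ring)
    have hdiv := h1.div (hu_deriv t) (hu_pos t).ne'
    have h3 := (hdiv.const_sub q)
    have key : ∀ n d : ℝ, d ≠ 0 → -((-n * d - n * -n) / d ^ 2) = (n / d) * (1 - n / d) := by
      intro n d hd; field_simp; ring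
    rw [← key (q * Real.exp (-t)) (u t) (hu_pos t).ne']
    exact h3
  have hψ'_le : ∀ t : ℝ, (q * Real.exp (-t) / u t) * (1 - q * Real.exp (-t) / u t) ≤ 1/4 := by
    intro t
    set w := q * Real.exp (-t) / u t with hw
    have hw0 : 0 ≤ w := by
      apply div_nonneg (mul_nonneg hq0 (Real.exp_pos _).le) (hu_pos t).le
    have hw1 : w ≤ 1 := by
      rw [hw, div_le_one (hu_pos t)]
      simp only [hu_def]
      linarith
    nlinarith [sq_nonneg (w - 1/2)]
  -- step 1 : ψ t ≤ t / 4 on [0, ∞)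
  have hψ0 : ψ 0 = 0 := by simp [hψ_def, hu_def]
  have step1 : ∀ t : ℝ, 0 ≤ t → ψ t ≤ t / 4 := by
    intro t ht
    set g : ℝ → ℝ := fun t => t / 4 - ψ t with hg
    have hg_deriv : ∀ s, HasDerivAt g
        (1/4 - (q * Real.exp (-s) / u s) * (1 - q * Real.exp (-s) / u s)) s := by
      intro s
      have := ((hasDerivAt_id s).div_const 4).sub (hψ_deriv s)
      exact this
    have hmono : MonotoneOn g (Set.Ici (0:ℝ)) := by
      apply monotoneOn_of_deriv_nonneg (convex_Ici 0)
      · exact fun s _ => ((hg_deriv s).continuousAt).continuousWithinAt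
      · intro s _
        exact ((hg_deriv s).differentiableAt).differentiableWithinAt
      · intro s _
        rw [(hg_deriv s).deriv]
        have := hψ'_le s
        linarith
    have := hmono (Set.self_mem_Ici) (Set.mem_Ici.2 ht) ht
    simp only [hg, hψ0] at this
    linarith
  -- step 2
  intro x hx
  set φ : ℝ → ℝ := fun t => q * t + Real.log (u t) with hφ
  have hφ_deriv : ∀ s, HasDerivAt φ (ψ s) s := by
    intro s
    have hlog : HasDerivAt (fun t => Real.log (u t)) (-(q * Real.exp (-s)) / u s) s :=
      (hu_deriv s).log (hu_pos s).ne'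
    have := ((hasDerivAt_id s).const_mul q).add hlog
    exact this.congr_deriv (by simp only [hψ_def]; ring)
  have hφ0 : φ 0 = 0 := by simp [hφ, hu_def]
  set h : ℝ → ℝ := fun t => t ^ 2 / 8 - φ t with hh
  have hh_deriv : ∀ s, HasDerivAt h (s / 4 - ψ s) s := by
    intro s
    have h1 : HasDerivAt (fun t : ℝ => t ^ 2 / 8) (s / 4) s := by
      have := ((hasDerivAt_pow 2 s).div_const 8)
      exact this.congr_deriv (by simp only [Nat.reduceSub, pow_one, Nat.cast_ofNat]; ring)
    exact h1.sub (hφ_deriv s)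
  have hmono : MonotoneOn h (Set.Ici (0:ℝ)) := by
    apply monotoneOn_of_deriv_nonneg (convex_Ici 0)
    · exact fun s _ => ((hh_deriv s).continuousAt).continuousWithinAt
    · intro s _ 
      exact ((hh_deriv s).differentiableAt).differentiableWithinAt
    · intro s hs
      rw [(hh_deriv s).deriv]
      rw [interior_Ici] at hs
      have := step1 s (le_of_lt hs)
      linarith
  have := hmono (Set.self_mem_Ici) (Set.mem_Ici.2 hx) hx
  simp only [hh, hφ0] at this
  have : q * x + Real.log (u x) ≤ x ^ 2 / 8 := by
    simp only [hφ] at this ⊢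
    linarith
  simpa [hu_def] using this

open MeasureTheory Real

section tail
variable {Ω : Type*} [MeasurableSpace Ω] (μ : Measure Ω) [IsProbabilityMeasure μ]

lemma bern_mgf (B : Set Ω) (hB : MeasurableSet B) (lam : ℝ) (hlam : 0 ≤ lam) :
    ∫ ω, Real.exp (lam * ((μ B).toReal - B.indicator (fun _ => (1:ℝ)) ω)) ∂μ
      ≤ Real.exp (lam ^ 2 / 8) := by
  set q := (μ B).toReal with hq
  have hq0 : 0 ≤ q := ENNReal.toReal_nonneg
  have hq1 : q ≤ 1 := by
    rw [hq]
    calc (μ B).toReal ≤ (μ Set.univ).toReal := by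
          apply ENNReal.toReal_mono (measure_ne_top μ _) (measure_mono (Set.subset_univ _))
      _ = 1 := by simp
  have hfun : (fun ω => Real.exp (lam * (q - B.indicator (fun _ => (1:ℝ)) ω)))
      = fun ω => B.indicator (fun _ => Real.exp (lam * (q - 1)) - Real.exp (lam * q)) ω
          + Real.exp (lam * q) := by
    funext ω
    by_cases h : ω ∈ B <;> simp [h]
  rw [hfun]
  rw [integral_add ((integrable_indicator_iff hB).2 (integrableOn_const (measure_ne_top _ _))) (integrable_const _)]
  rw [integral_indicator_const _ hB, integral_const]
  simp only [smul_eq_mul, Measure.real, measure_univ, ENNReal.toReal_one, one_mul]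
  have expand : q * (Real.exp (lam * (q-1)) - Real.exp (lam * q)) + Real.exp (lam * q)
      = Real.exp (lam * q) * (1 - q + q * Real.exp (-lam)) := by
    rw [show lam * (q - 1) = lam * q + (-lam) by ring, Real.exp_add]
    ring
  rw [← hq, expand]
  have hpos : 0 < 1 - q + q * Real.exp (-lam) := by
    rcases eq_or_lt_of_le hq0 with h | h
    · simp [← h]
    · have h1 : 0 < q * Real.exp (-lam) := mul_pos h (Real.exp_pos _)
      have : 0 ≤ 1 - q := by linarith
      positivity
  have key := hoeff_aux q hq0 hq1 lam hlam
  calc Real.exp (lam * q) * (1 - q + q * Real.exp (-lam))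
      = Real.exp (lam * q + Real.log (1 - q + q * Real.exp (-lam))) := by
        rw [Real.exp_add, Real.exp_log hpos]
    _ ≤ Real.exp (lam ^ 2 / 8) := by
        apply Real.exp_le_exp.2; rw [mul_comm]; exact key
end tail

section tail2
variable {Ω : Type*} [MeasurableSpace Ω]

lemma bern_tail (μ : Measure Ω) [IsProbabilityMeasure μ] (B : Set Ω) (hB : MeasurableSet B)
    (m : ℕ) (hm : 1 ≤ m) (t : ℝ) (ht : 0 ≤ t) :
    (Measure.pi fun _ : Fin m => μ)
      {S : Fin m → Ω | (m : ℝ) * t ≤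
        ∑ i : Fin m, ((μ B).toReal - B.indicator (fun _ => (1:ℝ)) (S i))}
      ≤ ENNReal.ofReal (Real.exp (-2 * m * t ^ 2)) := by
  letI : MeasureSpace Ω := ⟨μ⟩
  set q := (μ B).toReal with hq
  have hq0 : 0 ≤ q := ENNReal.toReal_nonneg
  set lam := 4 * t with hlam_def
  have hlam : 0 ≤ lam := by positivity
  set Z : (Fin m → Ω) → ℝ := fun S => ∑ i : Fin m, (q - B.indicator (fun _ => (1:ℝ)) (S i))
    with hZ
  set f : (Fin m → Ω) → ℝ := fun S => Real.exp (lam * Z S) with hf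
  have hmeas_ind : Measurable (B.indicator (fun _ => (1:ℝ))) :=
    measurable_const.indicator hB
  have hfmeas : Measurable f := by
    apply Real.measurable_exp.comp
    apply Measurable.const_mul
    exact Finset.measurable_sum _ (fun i _ => (measurable_const.sub (hmeas_ind.comp (measurable_pi_apply i))))
  have hμpi : IsProbabilityMeasure (Measure.pi fun _ : Fin m => μ) := by infer_instance
  -- integrability of f
  have hbound : ∀ S, ‖f S‖ ≤ Real.exp (lam * m) := by
    intro S
    rw [Real.norm_eq_abs, abs_of_pos (Real.exp_pos _)]
    apply Real.exp_le_exp.2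
    apply mul_le_mul_of_nonneg_left _ hlam
    rw [hZ]
    calc ∑ i : Fin m, (q - B.indicator (fun _ => (1:ℝ)) (S i))
        ≤ ∑ i : Fin m, (1:ℝ) := by
          apply Finset.sum_le_sum
          intro i _
          have h1 : 0 ≤ B.indicator (fun _ => (1:ℝ)) (S i) := by
            apply Set.indicator_nonneg; intro _ _; norm_num
          have hq1 : q ≤ 1 := by
            rw [hq]
            calc (μ B).toReal ≤ (μ Set.univ).toReal := by
                  apply ENNReal.toReal_mono (measure_ne_top μ _)
                    (measure_mono (Set.subset_univ _))
              _ = 1 := by simp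
          linarith
      _ = m := by simp
  have hint : Integrable f (Measure.pi fun _ : Fin m => μ) := by
    apply Integrable.mono' (integrable_const (Real.exp (lam * m)))
      hfmeas.aestronglyMeasurable
    exact Filter.Eventually.of_forall hbound
  -- Markov
  have hsub : {S : Fin m → Ω | (m : ℝ) * t ≤ Z S}
      ⊆ {S : Fin m → Ω | Real.exp (lam * (m * t)) ≤ f S} := by
    intro S hS
    simp only [Set.mem_setOf_eq] at hS ⊢
    exact Real.exp_le_exp.2 (mul_le_mul_of_nonneg_left hS hlam)
  have markov := mul_meas_ge_le_integral_of_nonneg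
    (μ := Measure.pi fun _ : Fin m => μ) (f := f)
    (Filter.Eventually.of_forall (fun S => (Real.exp_pos _).le)) hint (Real.exp (lam * (m * t)))
  -- compute the integral: product
  have hprod : ∫ S, f S ∂(Measure.pi fun _ : Fin m => μ)
      = (∫ ω, Real.exp (lam * (q - B.indicator (fun _ => (1:ℝ)) ω)) ∂μ) ^ m := by
    have : f = fun S : Fin m → Ω =>
        ∏ i : Fin m, Real.exp (lam * (q - B.indicator (fun _ => (1:ℝ)) (S i))) := by
      funext S
      simp only [hf, hZ, Finset.mul_sum, Real.exp_sum]
    rw [this]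
    have := MeasureTheory.integral_fintype_prod_eq_pow (ι := Fin m) (μ := μ)
      (fun ω : Ω => Real.exp (lam * (q - B.indicator (fun _ => (1:ℝ)) ω)))
    simpa [volume, Measure.pi] using this
  have hmgf : ∫ ω, Real.exp (lam * (q - B.indicator (fun _ => (1:ℝ)) ω)) ∂μ
      ≤ Real.exp (lam ^ 2 / 8) := bern_mgf μ B hB lam hlam
  have hint_le : ∫ S, f S ∂(Measure.pi fun _ : Fin m => μ) ≤ Real.exp (lam ^ 2 / 8) ^ m := by
    rw [hprod]
    apply pow_le_pow_left₀ _ hmgf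
    apply integral_nonneg
    intro ω; exact (Real.exp_pos _).le
  -- combine
  have htoReal : ((Measure.pi fun _ : Fin m => μ)
      {S : Fin m → Ω | (m : ℝ) * t ≤ Z S}).toReal ≤ Real.exp (-2 * m * t ^ 2) := by
    have h1 : ((Measure.pi fun _ : Fin m => μ) {S : Fin m → Ω | (m : ℝ) * t ≤ Z S}).toReal
        ≤ ((Measure.pi fun _ : Fin m => μ)
          {S : Fin m → Ω | Real.exp (lam * (m * t)) ≤ f S}).toReal := by
      apply ENNReal.toReal_mono (measure_ne_top _ _) (measure_mono hsub)
    have h2 : Real.exp (lam * (m * t)) *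
        ((Measure.pi fun _ : Fin m => μ)
          {S : Fin m → Ω | Real.exp (lam * (m * t)) ≤ f S}).toReal
        ≤ Real.exp (lam ^ 2 / 8) ^ m := le_trans markov hint_le
    have h3 : ((Measure.pi fun _ : Fin m => μ)
        {S : Fin m → Ω | Real.exp (lam * (m * t)) ≤ f S}).toReal
        ≤ Real.exp (lam ^ 2 / 8) ^ m / Real.exp (lam * (m * t)) := by
      rw [le_div_iff₀ (Real.exp_pos _)]
      linarith [h2]
    calc _ ≤ Real.exp (lam ^ 2 / 8) ^ m / Real.exp (lam * (m * t)) := le_trans h1 h3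
      _ = Real.exp (-2 * m * t ^ 2) := by
        rw [← Real.exp_nat_mul, ← Real.exp_sub]
        congr 1
        rw [hlam_def]
        ring
  rw [ENNReal.le_ofReal_iff_toReal_le (measure_ne_top _ _) (Real.exp_pos _).le]
  exact htoReal
end tail2


set_option maxHeartbeats 1000000 in
lemma num_ineq (p m : ℕ) (hp : 1 ≤ p) (hm : 1 ≤ m) (δ : ℝ) (hδ : 0 < δ) (hδ1 : δ < 1) :
    (2:ℝ)^(2*p) * Real.exp (-2 * m * (Real.sqrt ((p:ℝ)/m)
        + (Real.sqrt (Real.log (2/δ)) - 1/2)/Real.sqrt (2*m))^2)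
      + 2 * Real.exp (-2 * m * ((Real.sqrt (Real.log (2/δ)) + 1)/Real.sqrt (2*m))^2) ≤ δ := by
  have hL : Real.log 2 ≤ Real.log (2/δ) := by
    apply Real.log_le_log (by norm_num)
    rw [le_div_iff₀ hδ]; linarith
  have hlog2 : (0.69:ℝ) ≤ Real.log 2 := by
    have := Real.log_two_gt_d9; linarith
  have hlog2' : Real.log 2 ≤ 0.7 := by
    have := Real.log_two_lt_d9; linarith
  have hL0 : 0 < Real.log (2/δ) := by linarith
  obtain ⟨r, hr2, hr08⟩ : ∃ r : ℝ, r^2 = Real.log (2/δ) ∧ (0.8:ℝ) ≤ r := by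
    refine ⟨Real.sqrt (Real.log (2/δ)), Real.sq_sqrt hL0.le, ?_⟩
    rw [show (0.8:ℝ) = Real.sqrt 0.64 by
      rw [show (0.64:ℝ) = 0.8^2 by norm_num]; exact (Real.sqrt_sq (by norm_num)).symm]
    exact Real.sqrt_le_sqrt (by linarith)
  rw [show Real.sqrt (Real.log (2/δ)) = r by
    rw [← hr2]; exact Real.sqrt_sq (by linarith)]
  have hmpos : (0:ℝ) < m := by
    have : (1:ℝ) ≤ (m:ℝ) := by exact_mod_cast hm
    linarith
  have hp1 : (1:ℝ) ≤ (p:ℝ) := by exact_mod_cast hp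
  obtain ⟨sm, hsm2, hsmpos⟩ : ∃ sm : ℝ, sm^2 = (m:ℝ) ∧ 0 < sm :=
    ⟨Real.sqrt m, Real.sq_sqrt hmpos.le, Real.sqrt_pos.2 hmpos⟩
  obtain ⟨sp, hsp2, hsp1⟩ : ∃ sp : ℝ, sp^2 = (p:ℝ) ∧ 1 ≤ sp := by
    refine ⟨Real.sqrt p, Real.sq_sqrt (by positivity), ?_⟩
    rw [show (1:ℝ) = Real.sqrt 1 by simp]
    exact Real.sqrt_le_sqrt hp1
  obtain ⟨w, hw2, hw141, hw142⟩ : ∃ w : ℝ, w^2 = 2 ∧ (1.41:ℝ) ≤ w ∧ w ≤ 1.42 := by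
    refine ⟨Real.sqrt 2, Real.sq_sqrt (by norm_num), ?_, ?_⟩ <;>
      nlinarith [Real.sq_sqrt (show (0:ℝ) ≤ 2 by norm_num), Real.sqrt_nonneg 2]
  have hb : Real.sqrt (2*m) = w * sm := by
    rw [show w = Real.sqrt 2 by nlinarith [Real.sq_sqrt (show (0:ℝ) ≤ 2 by norm_num), Real.sqrt_nonneg 2],
      show sm = Real.sqrt m by nlinarith [Real.sq_sqrt hmpos.le, Real.sqrt_nonneg (m:ℝ)],
      ← Real.sqrt_mul (by norm_num)]
  have ha : Real.sqrt ((p:ℝ)/m) = sp / sm := by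
    rw [show sp = Real.sqrt p by nlinarith [Real.sq_sqrt (show (0:ℝ) ≤ (p:ℝ) by positivity), Real.sqrt_nonneg (p:ℝ)],
      show sm = Real.sqrt m by nlinarith [Real.sq_sqrt hmpos.le, Real.sqrt_nonneg (m:ℝ)],
      Real.sqrt_div (by positivity)]
  rw [ha, hb]
  obtain ⟨c, hcdef⟩ : ∃ c : ℝ, c = r - 1/2 := ⟨_, rfl⟩
  have hc : (0.3:ℝ) ≤ c := by rw [hcdef]; linarith
  have hwpos : 0 < w := by linarith
  -- exponent A
  have hexpA : -2 * (m:ℝ) * ((r + 1)/(w*sm))^2 = -(r^2) - (2*r + 1) := by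
    rw [div_pow, mul_pow, hw2, hsm2]
    field_simp
    ring
  -- exponent B
  have hcomb : sp/sm + c/(w*sm) = (sp*w + c)/(w*sm) := by
    field_simp
  have hsq : (sp*w + c)^2 = 2*(p:ℝ) + 2*w*sp*c + c^2 := by
    linear_combination sp^2 * hw2 + 2 * hsp2
  have hexpB : -2 * (m:ℝ) * ((sp*w + c)/(w*sm))^2 = -(2*(p:ℝ)) - 2*w*sp*c - c^2 := by
    rw [div_pow, mul_pow, hw2, hsm2, hsq]
    field_simp
    ring
  have h2p : (2:ℝ)^(2*p) = Real.exp ((2*(p:ℝ)) * Real.log 2) := by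
    rw [show (2*(p:ℝ)) * Real.log 2 = (2*p : ℕ) * Real.log 2 by push_cast; ring,
      Real.exp_nat_mul, Real.exp_log (by norm_num)]
  have hBexp : (2*(p:ℝ)) * Real.log 2 + (-(2*(p:ℝ)) - 2*w*sp*c - c^2) ≤ -(r^2) := by
    have h1 : 2*(p:ℝ)*Real.log 2 - 2*(p:ℝ) ≤ -0.6 := by nlinarith
    have h2 : 2*w*c ≤ 2*w*sp*c := by
      nlinarith [mul_nonneg (mul_nonneg (by linarith : (0:ℝ) ≤ 2*w) (by linarith : (0:ℝ) ≤ c))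
        (by linarith : (0:ℝ) ≤ sp - 1)]
    have h4 : 2.82*c ≤ 2*w*c := by nlinarith
    have h3 : r^2 - c^2 = r - 1/4 := by rw [hcdef]; ring
    have h5 : c = r - 1/2 := hcdef
    linarith
  have hδeq : δ = 2 * Real.exp (-(r^2)) := by
    rw [hr2, Real.exp_neg, Real.exp_log (by positivity)]
    field_simp
  rw [show r - 1/2 = c from hcdef.symm, hcomb, hδeq]
  have hA : (2:ℝ) * Real.exp (-2 * m * ((r + 1)/(w*sm))^2)
      = 2 * Real.exp (-(r^2)) * Real.exp (-(2*r+1)) := by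
    rw [hexpA, mul_assoc, ← Real.exp_add]; ring_nf; try ring
  have hB : (2:ℝ)^(2*p) * Real.exp (-2 * m * ((sp*w + c)/(w*sm))^2) ≤ Real.exp (-(r^2)) := by
    rw [h2p, hexpB, ← Real.exp_add]
    exact Real.exp_le_exp.2 hBexp
  rw [hA]
  have hexp_small : Real.exp (-(2*r+1)) ≤ 1/2 := by
    have h5 : (2:ℝ) ≤ Real.exp (2*r+1) := by nlinarith [Real.add_one_le_exp (2*r+1)]
    have hinv : Real.exp (-(2*r+1)) * Real.exp (2*r+1) = 1 := by
      rw [← Real.exp_add, neg_add_cancel, Real.exp_zero]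
    nlinarith [Real.exp_pos (-(2*r+1))]
  have key : 2*Real.exp (-r^2)*Real.exp (-(2*r+1)) ≤ Real.exp (-r^2) := by
    have h6 := mul_le_mul_of_nonneg_left hexp_small
      (show (0:ℝ) ≤ 2*Real.exp (-r^2) by positivity)
    have h7 : 2*Real.exp (-r^2)*(1/2) = Real.exp (-r^2) := by ring
    linarith
  calc (2:ℝ)^(2*p) * Real.exp (-2 * m * ((sp*w + c)/(w*sm))^2)
        + 2*Real.exp (-r^2)*Real.exp (-(2*r+1))
      ≤ Real.exp (-r^2) + 2*Real.exp (-r^2)*Real.exp (-(2*r+1)) :=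
        add_le_add hB (le_refl _)
    _ ≤ Real.exp (-r^2) + Real.exp (-r^2) := add_le_add (le_refl _) key
    _ = 2 * Real.exp (-r^2) := by ring


set_option maxHeartbeats 1000000 in
theorem generalization_bound_via_coloring
    (X : Type*) [MeasurableSpace X]
    (D : Measure (X × ℝ)) [IsProbabilityMeasure D]
    (hD : ∀ᵐ ω ∂D, ω.2 = -1 ∨ ω.2 = 1)
    (F : Set (X → ℝ)) (hFne : F.Nonempty) (hFc : F.Countable)
    (hFmeas : ∀ f ∈ F, Measurable f)
    (hFbdd : ∀ f ∈ F, ∀ x, f x ∈ Set.Icc (-1 : ℝ) 1)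
    (ℓ : ℝ → ℝ → ℝ) (γ : ℝ) (hγ : 0 ≤ γ)
    (hℓrange : ∀ u ∈ Set.Icc (-1 : ℝ) 1, ∀ y : ℝ, (y = -1 ∨ y = 1) →
      ℓ u y ∈ Set.Icc (0 : ℝ) 1)
    (hℓlip : ∀ u ∈ Set.Icc (-1 : ℝ) 1, ∀ v ∈ Set.Icc (-1 : ℝ) 1,
      ∀ y : ℝ, (y = -1 ∨ y = 1) → |ℓ u y - ℓ v y| ≤ γ * |u - v|)
    (p : ℕ) (hp : 1 ≤ p) (κ : X → Fin p) (hκ : Measurable κ)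
    (hresp : ∀ f ∈ F, ∀ x x' : X, κ x = κ x' → f x = f x')
    (m : ℕ) (hm : 1 ≤ m) (δ : ℝ) (hδ : 0 < δ) :
    ENNReal.ofReal (1 - δ) ≤
      (Measure.pi fun _ : Fin m => D)
        {S : Fin m → X × ℝ | ∀ f ∈ F,
          (∫ ω, ℓ (f ω.1) ω.2 ∂D) ≤
            (1 / (m : ℝ)) * ∑ i, ℓ (f (S i).1) (S i).2 +
              2 * γ * Real.sqrt ((p : ℝ) / m) +
              3 * Real.sqrt (Real.log (2 / δ) / (2 * m))} := by
  classical
  by_cases hδ1 : 1 ≤ δ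
  · rw [ENNReal.ofReal_of_nonpos (by linarith)]; exact zero_le
  push_neg at hδ1
  have hmR : (1:ℝ) ≤ (m:ℝ) := by exact_mod_cast hm
  have hmpos : (0:ℝ) < m := by linarith
  -- log and sqrt setup
  have hL : Real.log 2 ≤ Real.log (2/δ) := by
    apply Real.log_le_log (by norm_num)
    rw [le_div_iff₀ hδ]; linarith
  have hlog2 : (0.69:ℝ) ≤ Real.log 2 := by have := Real.log_two_gt_d9; linarith
  have hL0 : 0 < Real.log (2/δ) := by linarith
  set r := Real.sqrt (Real.log (2/δ)) with hrdef
  have hr08 : (0.8:ℝ) ≤ r := by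
    rw [hrdef, show (0.8:ℝ) = Real.sqrt 0.64 by
      rw [show (0.64:ℝ) = 0.8^2 by norm_num]; exact (Real.sqrt_sq (by norm_num)).symm]
    exact Real.sqrt_le_sqrt (by linarith)
  set sb := Real.sqrt (2*(m:ℝ)) with hsbdef
  have hsbpos : 0 < sb := Real.sqrt_pos.2 (by linarith)
  set t1 := (r + 1)/sb with ht1def
  set τ2 := Real.sqrt ((p:ℝ)/(m:ℝ)) + (r - 1/2)/sb with hτ2def
  have ht1 : 0 ≤ t1 := by rw [ht1def]; positivity
  have hτ2 : 0 ≤ τ2 := by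
    rw [hτ2def]
    have : 0 ≤ (r - 1/2)/sb := by apply div_nonneg (by linarith) hsbpos.le
    positivity
  -- the coloring map to atoms
  set Φ : X × ℝ → Fin p × Bool := fun ω => (κ ω.1, if 0 < ω.2 then true else false) with hΦdef
  have hΦ : Measurable Φ := by
    apply Measurable.prodMk (hκ.comp measurable_fst)
    exact Measurable.ite (measurableSet_lt measurable_const measurable_snd)
      measurable_const measurable_const
  have hAmeas : ∀ A : Finset (Fin p × Bool), MeasurableSet (Φ ⁻¹' ↑A) :=
    fun A => hΦ A.finite_toSet.measurableSet
  -- deviations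
  set dev : Finset (Fin p × Bool) → (Fin m → X × ℝ) → ℝ := fun A S =>
    ∑ i : Fin m, ((D (Φ ⁻¹' ↑A)).toReal
      - (Φ ⁻¹' (↑A : Set (Fin p × Bool))).indicator (fun _ => (1:ℝ)) (S i)) with hdevdef
  set A1 : Finset (Fin p × Bool) := Finset.univ.filter (fun e => e.2 = true) with hA1def
  set G : Set (Fin m → X × ℝ) := {S | (∀ i, (S i).2 = -1 ∨ (S i).2 = 1) ∧
      (∀ A : Finset (Fin p × Bool), dev A S ≤ (m:ℝ) * τ2) ∧
      dev A1 S ≤ (m:ℝ) * t1 ∧ dev A1ᶜ S ≤ (m:ℝ) * t1} with hGdef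
  -- Part 1: the good event has large measure
  have hGbig : ENNReal.ofReal (1 - δ) ≤ (Measure.pi fun _ : Fin m => D) G := by
    have hbadA : ∀ A : Finset (Fin p × Bool),
        (Measure.pi fun _ : Fin m => D) {S | (m:ℝ)*τ2 ≤ dev A S}
          ≤ ENNReal.ofReal (Real.exp (-2*m*τ2^2)) := fun A =>
      bern_tail D _ (hAmeas A) m hm τ2 hτ2
    have hbad1 : ∀ A : Finset (Fin p × Bool),
        (Measure.pi fun _ : Fin m => D) {S | (m:ℝ)*t1 ≤ dev A S}
          ≤ ENNReal.ofReal (Real.exp (-2*m*t1^2)) := fun A =>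
      bern_tail D _ (hAmeas A) m hm t1 ht1
    have hNull : (Measure.pi fun _ : Fin m => D)
        (⋃ i : Fin m, (Function.eval i) ⁻¹' {ω : X × ℝ | ¬(ω.2 = -1 ∨ ω.2 = 1)}) = 0 := by
      apply measure_iUnion_null
      intro i
      exact MeasureTheory.Measure.pi_eval_preimage_null (μ := fun _ : Fin m => D)
        (i := i) (ae_iff.1 hD)
    have hGc : Gᶜ ⊆ (⋃ i : Fin m, (Function.eval i) ⁻¹' {ω : X × ℝ | ¬(ω.2 = -1 ∨ ω.2 = 1)})
        ∪ ((⋃ A : Finset (Fin p × Bool), {S | (m:ℝ)*τ2 ≤ dev A S})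
          ∪ ({S | (m:ℝ)*t1 ≤ dev A1 S} ∪ {S | (m:ℝ)*t1 ≤ dev A1ᶜ S})) := by
      intro S hS
      rw [Set.mem_compl_iff, hGdef, Set.mem_setOf_eq] at hS
      rcases not_and_or.1 hS with h1 | h23
      · left
        rw [not_forall] at h1
        obtain ⟨i, hi⟩ := h1
        exact Set.mem_iUnion.2 ⟨i, hi⟩
      · right
        rcases not_and_or.1 h23 with h2 | h34
        · left
          push_neg at h2
          obtain ⟨A, hA⟩ := h2
          exact Set.mem_iUnion.2 ⟨A, le_of_lt hA⟩
        · right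
          rcases not_and_or.1 h34 with h3 | h4
          · exact Or.inl (le_of_lt (by push_neg at h3; exact h3))
          · exact Or.inr (le_of_lt (by push_neg at h4; exact h4))
    have hGcmeas : (Measure.pi fun _ : Fin m => D) Gᶜ ≤ ENNReal.ofReal δ := by
      calc (Measure.pi fun _ : Fin m => D) Gᶜ
          ≤ (Measure.pi fun _ : Fin m => D)
            ((⋃ i : Fin m, (Function.eval i) ⁻¹' {ω : X × ℝ | ¬(ω.2 = -1 ∨ ω.2 = 1)})
              ∪ ((⋃ A : Finset (Fin p × Bool), {S | (m:ℝ)*τ2 ≤ dev A S})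
                ∪ ({S | (m:ℝ)*t1 ≤ dev A1 S} ∪ {S | (m:ℝ)*t1 ≤ dev A1ᶜ S}))) :=
            measure_mono hGc
        _ ≤ 0 + ((∑' A : Finset (Fin p × Bool), ENNReal.ofReal (Real.exp (-2*m*τ2^2)))
              + (ENNReal.ofReal (Real.exp (-2*m*t1^2)) + ENNReal.ofReal (Real.exp (-2*m*t1^2)))) := by
            apply le_trans (measure_union_le _ _)
            apply add_le_add (le_of_eq hNull)
            apply le_trans (measure_union_le _ _)
            apply add_le_add
            · exact le_trans (measure_iUnion_le _) (ENNReal.tsum_le_tsum (fun A => hbadA A))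
            · exact le_trans (measure_union_le _ _) (add_le_add (hbad1 A1) (hbad1 A1ᶜ))
        _ ≤ ENNReal.ofReal δ := by
            rw [zero_add, tsum_fintype]
            rw [Finset.sum_const, Finset.card_univ, Fintype.card_finset, Fintype.card_prod,
              Fintype.card_fin, Fintype.card_bool, nsmul_eq_mul]
            have hcast : ((2 ^ (p * 2) : ℕ) : ENNReal) * ENNReal.ofReal (Real.exp (-2*m*τ2^2))
                = ENNReal.ofReal ((2:ℝ)^(2*p) * Real.exp (-2*m*τ2^2)) := by
              rw [ENNReal.ofReal_mul (by positivity)]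
              congr 1
              rw [← ENNReal.ofReal_natCast]
              congr 1
              push_cast
              rw [mul_comm p 2]
            rw [hcast, ← ENNReal.ofReal_add (by positivity) (by positivity),
              ← ENNReal.ofReal_add (by positivity) (by positivity)]
            apply ENNReal.ofReal_le_ofReal
            have := num_ineq p m hp hm δ hδ hδ1
            rw [ht1def, hτ2def, hsbdef, hrdef]
            calc (2:ℝ)^(2*p) * Real.exp (-2*m*(Real.sqrt ((p:ℝ)/(m:ℝ))
                  + (Real.sqrt (Real.log (2/δ)) - 1/2)/Real.sqrt (2*(m:ℝ)))^2)
                + (Real.exp (-2*m*((Real.sqrt (Real.log (2/δ)) + 1)/Real.sqrt (2*(m:ℝ)))^2)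
                  + Real.exp (-2*m*((Real.sqrt (Real.log (2/δ)) + 1)/Real.sqrt (2*(m:ℝ)))^2))
                = (2:ℝ)^(2*p) * Real.exp (-2 * m * (Real.sqrt ((p:ℝ)/m)
                  + (Real.sqrt (Real.log (2/δ)) - 1/2)/Real.sqrt (2*m))^2)
                + 2 * Real.exp (-2 * m * ((Real.sqrt (Real.log (2/δ)) + 1)/Real.sqrt (2*m))^2) := by
                  ring
              _ ≤ δ := this
    -- conclude
    have hsum : (1:ENNReal) ≤ (Measure.pi fun _ : Fin m => D) G
        + (Measure.pi fun _ : Fin m => D) Gᶜ := by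
      have h1 : (Measure.pi fun _ : Fin m => D) (G ∪ Gᶜ)
          ≤ (Measure.pi fun _ : Fin m => D) G + (Measure.pi fun _ : Fin m => D) Gᶜ :=
        measure_union_le _ _
      rw [Set.union_compl_self] at h1
      simpa using h1
    have h2 : ENNReal.ofReal (1 - δ) + ENNReal.ofReal δ
        ≤ (Measure.pi fun _ : Fin m => D) G + ENNReal.ofReal δ := by
      rw [← ENNReal.ofReal_add (by linarith) hδ.le]
      have : (1 - δ) + δ = 1 := by ring
      rw [this, ENNReal.ofReal_one]
      exact le_trans hsum (add_le_add (le_refl _) hGcmeas)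
    exact (ENNReal.add_le_add_iff_right ENNReal.ofReal_ne_top).1 h2
  -- Part 2: the good event implies the bound
  refine le_trans hGbig (measure_mono ?_)

  intro S hS
  obtain ⟨hSy, hSall, hSA1, hSA1c⟩ := hS
  -- fiber data
  set ν : Fin p × Bool → ℝ := fun e => (D (Φ ⁻¹' {e})).toReal with hνdef
  set Ne : Fin p × Bool → ℕ := fun e => (Finset.univ.filter (fun i => Φ (S i) = e)).card
    with hNedef
  set Δ : Fin p × Bool → ℝ := fun e => ν e - (Ne e : ℝ)/(m:ℝ) with hΔdef
  have hfibermeas : ∀ e : Fin p × Bool, MeasurableSet (Φ ⁻¹' {e}) :=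
    fun e => hΦ (measurableSet_singleton e)
  -- decomposition of the measure of a union of fibers
  have hq : ∀ A : Finset (Fin p × Bool), (D (Φ ⁻¹' ↑A)).toReal = ∑ e ∈ A, ν e := by
    intro A
    have hbu : ⋃ e ∈ A, Φ ⁻¹' {e} = Φ ⁻¹' (↑A : Set (Fin p × Bool)) :=
      Set.biUnion_preimage_singleton Φ ↑A
    rw [← hbu, measure_biUnion_finset ?_ (fun e _ => hfibermeas e), ENNReal.toReal_sum
      (fun e _ => measure_ne_top _ _)]
    intro a _ b _ hab
    apply Disjoint.preimage
    exact Set.disjoint_singleton.2 hab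
  -- counting
  have hcount : ∀ A : Finset (Fin p × Bool),
      ∑ i : Fin m, (Φ ⁻¹' (↑A : Set (Fin p × Bool))).indicator (fun _ => (1:ℝ)) (S i)
        = ∑ e ∈ A, (Ne e : ℝ) := by
    intro A
    have h1 : ∀ i : Fin m, (Φ ⁻¹' (↑A : Set (Fin p × Bool))).indicator (fun _ => (1:ℝ)) (S i)
        = if Φ (S i) ∈ A then (1:ℝ) else 0 := by
      intro i
      by_cases h : Φ (S i) ∈ A
      · rw [Set.indicator_of_mem (by simpa using h), if_pos h]
      · rw [Set.indicator_of_notMem (by simpa using h), if_neg h]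
    rw [Finset.sum_congr rfl (fun i _ => h1 i), Finset.sum_boole]
    have h2 : (Finset.univ.filter (fun i => Φ (S i) ∈ A)).card = ∑ e ∈ A, Ne e := by
      rw [Finset.card_eq_sum_card_fiberwise (s := Finset.univ.filter (fun i => Φ (S i) ∈ A))
        (f := fun i => Φ (S i)) (t := A) (fun i hi => (Finset.mem_filter.1 hi).2)]
      apply Finset.sum_congr rfl
      intro e he
      congr 1
      rw [Finset.filter_filter]
      apply Finset.filter_congr
      intro i _
      constructor
      · exact fun h => h.2
      · exact fun h => ⟨by change Φ (S i) ∈ A; rw [h]; exact he, h⟩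
    rw [h2]
    push_cast
    rfl
  -- dev in terms of Δ
  have hdev : ∀ A : Finset (Fin p × Bool), dev A S = (m:ℝ) * ∑ e ∈ A, Δ e := by
    intro A
    rw [hdevdef]
    simp only
    rw [Finset.sum_sub_distrib, Finset.sum_const, Finset.card_univ, Fintype.card_fin,
      hcount A, hq A, nsmul_eq_mul, Finset.mul_sum, Finset.mul_sum, ← Finset.sum_sub_distrib]
    apply Finset.sum_congr rfl
    intro e _
    rw [hΔdef]
    simp only
    field_simp
  have hΔsum : ∀ A : Finset (Fin p × Bool), ∑ e ∈ A, Δ e ≤ τ2 := by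
    intro A
    have := hSall A
    rw [hdev A] at this
    exact le_of_mul_le_mul_left this hmpos
  have hΔA1 : ∑ e ∈ A1, Δ e ≤ t1 := by
    have := hSA1; rw [hdev A1] at this; exact le_of_mul_le_mul_left this hmpos
  have hΔA1c : ∑ e ∈ A1ᶜ, Δ e ≤ t1 := by
    have := hSA1c; rw [hdev A1ᶜ] at this; exact le_of_mul_le_mul_left this hmpos
  -- total sums
  have hνtot : ∑ e : Fin p × Bool, ν e = 1 := by
    have h1 := hq Finset.univ
    have h2 : (Φ ⁻¹' (↑(Finset.univ : Finset (Fin p × Bool)) : Set (Fin p × Bool)))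
        = Set.univ := by
      simp
    rw [h2] at h1
    simp at h1
    rw [← h1]
  have hNetot : ∑ e : Fin p × Bool, (Ne e : ℝ) = (m:ℝ) := by
    have h1 : ∑ e : Fin p × Bool, Ne e = (Finset.univ : Finset (Fin m)).card := by
      rw [Finset.card_eq_sum_card_fiberwise
        (f := fun i => Φ (S i)) (t := Finset.univ) (fun i _ => Finset.mem_univ _)]
    have : ∑ e : Fin p × Bool, (Ne e : ℝ) = ((∑ e : Fin p × Bool, Ne e : ℕ) : ℝ) := by
      push_cast; rfl
    rw [this, h1, Finset.card_univ, Fintype.card_fin]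
  have hΔtot : ∑ e : Fin p × Bool, Δ e = 0 := by
    rw [hΔdef]
    simp only
    rw [Finset.sum_sub_distrib, hνtot, ← Finset.sum_div, hNetot]
    rw [div_self hmpos.ne', sub_self]
  -- now fix f
  intro f hf
  -- values on fibers
  set g : Fin p → ℝ := fun c => if h : ∃ x, κ x = c then f (Classical.choose h) else 0
    with hgdef
  have hgk : ∀ x : X, g (κ x) = f x := by
    intro x
    have hex : ∃ x', κ x' = κ x := ⟨x, rfl⟩
    rw [hgdef]
    simp only [dif_pos hex]
    exact hresp f hf _ x (Classical.choose_spec hex)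
  have hgmem : ∀ c, g c ∈ Set.Icc (-1:ℝ) 1 := by
    intro c
    rw [hgdef]
    by_cases h : ∃ x, κ x = c
    · simp only [dif_pos h]; exact hFbdd f hf _
    · simp only [dif_neg h]; constructor <;> norm_num
  set H : Fin p × Bool → ℝ := fun e => ℓ (g e.1) (if e.2 then 1 else -1) with hHdef
  set base : Fin p × Bool → ℝ := fun e => ℓ 0 (if e.2 then 1 else -1) with hbasedef
  have hy : ∀ e : Fin p × Bool, ((if e.2 then (1:ℝ) else -1) = -1 ∨ (if e.2 then (1:ℝ) else -1) = 1) := by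
    intro e; cases e.2 <;> simp
  have hHmem : ∀ e, H e ∈ Set.Icc (0:ℝ) 1 := fun e => hℓrange _ (hgmem e.1) _ (hy e)
  have hbasemem : ∀ e, base e ∈ Set.Icc (0:ℝ) 1 :=
    fun e => hℓrange 0 (by constructor <;> norm_num) _ (hy e)
  have hrr : ∀ e, |H e - base e| ≤ min γ 1 := by
    intro e
    apply le_min
    · calc |H e - base e| ≤ γ * |g e.1 - 0| :=
            hℓlip (g e.1) (hgmem e.1) 0 (by constructor <;> norm_num) _ (hy e)
        _ ≤ γ * 1 := by
            apply mul_le_mul_of_nonneg_left _ hγ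
            rw [sub_zero]
            exact abs_le.2 ⟨(hgmem e.1).1, (hgmem e.1).2⟩
        _ = γ := mul_one γ
    · have h1 := hHmem e; have h2 := hbasemem e
      rw [abs_le]
      constructor
      · linarith [h1.1, h2.2]
      · linarith [h1.2, h2.1]
  -- integral identity
  have hint1 : (∫ ω, ℓ (f ω.1) ω.2 ∂D) = ∑ e : Fin p × Bool, ν e * H e := by
    have hHΦ : ∀ᵐ ω ∂D, ℓ (f ω.1) ω.2 = H (Φ ω) := by
      filter_upwards [hD] with ω hω
      rw [hHdef, hΦdef]
      simp only
      rcases hω with h | h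
      · simp only [h]; norm_num [hgk]
      · simp only [h]; norm_num [hgk]
    rw [integral_congr_ae hHΦ]
    have hHsum : (fun ω => H (Φ ω)) = fun ω => ∑ e : Fin p × Bool,
        (Φ ⁻¹' {e}).indicator (fun _ => H e) ω := by
      funext ω
      rw [Finset.sum_eq_single (Φ ω)]
      · rw [Set.indicator_of_mem (by simp)]
      · intro b _ hb
        apply Set.indicator_of_notMem
        simp only [Set.mem_preimage, Set.mem_singleton_iff]
        exact fun h => hb h.symm
      · intro h; exact absurd (Finset.mem_univ _) h
    rw [hHsum, integral_finset_sum _ (fun e _ => ?_)]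
    · apply Finset.sum_congr rfl
      intro e _
      rw [integral_indicator_const _ (hfibermeas e), smul_eq_mul, hνdef]
      rfl
    · exact (integrable_indicator_iff (hfibermeas e)).2
        (integrableOn_const (measure_ne_top _ _))
  -- empirical identity
  have hemp : ∑ i : Fin m, ℓ (f (S i).1) (S i).2 = ∑ e : Fin p × Bool, (Ne e : ℝ) * H e := by
    have h1 : ∀ i : Fin m, ℓ (f (S i).1) (S i).2 = H (Φ (S i)) := by
      intro i
      rw [hHdef, hΦdef]
      simp only
      rcases hSy i with h | h
      · simp only [h]; norm_num [hgk]
      · simp only [h]; norm_num [hgk]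
    calc ∑ i : Fin m, ℓ (f (S i).1) (S i).2 = ∑ i : Fin m, H (Φ (S i)) :=
          Finset.sum_congr rfl (fun i _ => h1 i)
      _ = ∑ e : Fin p × Bool, ∑ i ∈ Finset.univ.filter (fun i => Φ (S i) = e), H (Φ (S i)) :=
          (Finset.sum_fiberwise _ _ _).symm
      _ = ∑ e : Fin p × Bool, (Ne e : ℝ) * H e := by
          apply Finset.sum_congr rfl
          intro e _
          rw [Finset.sum_congr rfl (fun i hi => by rw [(Finset.mem_filter.1 hi).2]),
            Finset.sum_const, nsmul_eq_mul, hNedef]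
  -- key bound on ∑ H Δ
  have hkey : ∑ e : Fin p × Bool, H e * Δ e ≤ 2 * γ * Real.sqrt ((p:ℝ)/m) + 3 * (r / sb) := by
    have hsplit : ∑ e : Fin p × Bool, H e * Δ e
        = ∑ e : Fin p × Bool, (H e - base e) * Δ e + ∑ e : Fin p × Bool, base e * Δ e := by
      rw [← Finset.sum_add_distrib]
      apply Finset.sum_congr rfl
      intro e _
      ring
    -- term 2 : base part
    have hterm2 : ∑ e : Fin p × Bool, base e * Δ e ≤ t1 := by
      have hsplit2 := Finset.sum_filter_add_sum_filter_not Finset.univ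
        (fun e : Fin p × Bool => e.2 = true) (fun e => base e * Δ e)
      have hb1 : ∑ e ∈ A1, base e * Δ e = ℓ 0 1 * ∑ e ∈ A1, Δ e := by
        rw [Finset.mul_sum]
        apply Finset.sum_congr rfl
        intro e he
        rw [hbasedef]
        simp only
        rw [if_pos (Finset.mem_filter.1 he).2]
      have hb2 : ∑ e ∈ A1ᶜ, base e * Δ e = ℓ 0 (-1) * ∑ e ∈ A1ᶜ, Δ e := by
        rw [Finset.mul_sum]
        apply Finset.sum_congr rfl
        intro e he
        rw [hbasedef]
        simp only
        rw [if_neg (by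
          rw [hA1def] at he
          rw [Finset.mem_compl, Finset.mem_filter] at he
          intro h; exact he ⟨Finset.mem_univ _, h⟩)]
      have hcomplA1 : (Finset.univ.filter (fun e : Fin p × Bool => ¬ e.2 = true)) = A1ᶜ := by
        rw [hA1def, Finset.compl_filter]
      have htot : ∑ e ∈ A1, Δ e + ∑ e ∈ A1ᶜ, Δ e = 0 := by
        have := Finset.sum_filter_add_sum_filter_not Finset.univ
          (fun e : Fin p × Bool => e.2 = true) Δ
        rw [hcomplA1] at this
        rw [hA1def, this, hΔtot]
      have hfull : ∑ e : Fin p × Bool, base e * Δ e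
          = ℓ 0 1 * ∑ e ∈ A1, Δ e + ℓ 0 (-1) * ∑ e ∈ A1ᶜ, Δ e := by
        rw [← hb1, ← hb2, ← hsplit2, hcomplA1, hA1def]
      rw [hfull]
      set d := ∑ e ∈ A1, Δ e with hddef
      have hd' : ∑ e ∈ A1ᶜ, Δ e = -d := by linarith
      rw [hd']
      have hr1 := hℓrange 0 (by constructor <;> norm_num) 1 (Or.inr rfl)
      have hr2 := hℓrange 0 (by constructor <;> norm_num) (-1) (Or.inl rfl)
      rcases le_or_gt 0 d with hdpos | hdneg
      · nlinarith [hΔA1, hr1.1, hr1.2, hr2.1, hr2.2]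
      · nlinarith [hΔA1c, hd', hr1.1, hr1.2, hr2.1, hr2.2]
    -- term 1 : Lipschitz part
    have hterm1 : ∑ e : Fin p × Bool, (H e - base e) * Δ e ≤ min γ 1 * (2 * τ2) := by
      have habs : ∑ e : Fin p × Bool, (H e - base e) * Δ e
          ≤ min γ 1 * ∑ e : Fin p × Bool, |Δ e| := by
        rw [Finset.mul_sum]
        apply Finset.sum_le_sum
        intro e _
        calc (H e - base e) * Δ e ≤ |(H e - base e) * Δ e| := le_abs_self _
          _ = |H e - base e| * |Δ e| := abs_mul _ _
          _ ≤ min γ 1 * |Δ e| := mul_le_mul_of_nonneg_right (hrr e) (abs_nonneg _)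
      have hsumabs : ∑ e : Fin p × Bool, |Δ e| ≤ 2 * τ2 := by
        set P := Finset.univ.filter (fun e : Fin p × Bool => 0 ≤ Δ e) with hPdef
        have hsplit3 := Finset.sum_filter_add_sum_filter_not Finset.univ
          (fun e : Fin p × Bool => 0 ≤ Δ e) (fun e => |Δ e|)
        have hcomplP : (Finset.univ.filter (fun e : Fin p × Bool => ¬ 0 ≤ Δ e)) = Pᶜ := by
          rw [hPdef, Finset.compl_filter]
        have hp1 : ∑ e ∈ P, |Δ e| = ∑ e ∈ P, Δ e := by
          apply Finset.sum_congr rfl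
          intro e he
          exact abs_of_nonneg (Finset.mem_filter.1 he).2
        have hp2 : ∑ e ∈ Pᶜ, |Δ e| = -∑ e ∈ Pᶜ, Δ e := by
          rw [← Finset.sum_neg_distrib]
          apply Finset.sum_congr rfl
          intro e he
          rw [hPdef, Finset.mem_compl, Finset.mem_filter] at he
          have : Δ e < 0 := by
            by_contra hcon
            exact he ⟨Finset.mem_univ _, not_lt.1 hcon⟩
          exact abs_of_neg this
        have htotP : ∑ e ∈ P, Δ e + ∑ e ∈ Pᶜ, Δ e = 0 := by
          have := Finset.sum_filter_add_sum_filter_not Finset.univ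
            (fun e : Fin p × Bool => 0 ≤ Δ e) Δ
          rw [hcomplP] at this
          rw [hPdef, this, hΔtot]
        calc ∑ e : Fin p × Bool, |Δ e|
            = ∑ e ∈ P, |Δ e| + ∑ e ∈ Pᶜ, |Δ e| := by rw [← hsplit3, hcomplP, hPdef]
          _ = ∑ e ∈ P, Δ e + (- ∑ e ∈ Pᶜ, Δ e) := by rw [hp1, hp2]
          _ = 2 * ∑ e ∈ P, Δ e := by linarith
          _ ≤ 2 * τ2 := by linarith [hΔsum P]
      calc ∑ e : Fin p × Bool, (H e - base e) * Δ e
          ≤ min γ 1 * ∑ e : Fin p × Bool, |Δ e| := habs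
        _ ≤ min γ 1 * (2 * τ2) := by
            apply mul_le_mul_of_nonneg_left hsumabs (le_min hγ zero_le_one)
    -- combine
    have hcomb : min γ 1 * (2 * τ2) ≤ 2 * γ * Real.sqrt ((p:ℝ)/m) + (2*r - 1)/sb := by
      rw [hτ2def, mul_add, mul_add]
      apply add_le_add
      · have h1 : min γ 1 ≤ γ := min_le_left _ _
        have h2 : 0 ≤ Real.sqrt ((p:ℝ)/(m:ℝ)) := Real.sqrt_nonneg _
        nlinarith [le_min hγ (zero_le_one (α := ℝ))]
      · have h1 : min γ 1 ≤ 1 := min_le_right _ _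
        have h2 : 0 ≤ (r - 1/2)/sb := div_nonneg (by linarith) hsbpos.le
        have h3 : min γ 1 * (2 * ((r - 1/2)/sb)) ≤ 1 * (2 * ((r - 1/2)/sb)) := by
          apply mul_le_mul_of_nonneg_right h1 (by linarith)
        calc min γ 1 * (2 * ((r - 1/2)/sb)) ≤ 1 * (2 * ((r - 1/2)/sb)) := h3
          _ = (2*r - 1)/sb := by field_simp
    have hfinal : t1 + (2*r - 1)/sb = 3 * (r/sb) := by
      rw [ht1def]
      field_simp
      ring
    calc ∑ e : Fin p × Bool, H e * Δ e
        = ∑ e : Fin p × Bool, (H e - base e) * Δ e + ∑ e : Fin p × Bool, base e * Δ e := hsplit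
      _ ≤ min γ 1 * (2 * τ2) + t1 := add_le_add hterm1 hterm2
      _ ≤ (2 * γ * Real.sqrt ((p:ℝ)/m) + (2*r - 1)/sb) + t1 := add_le_add hcomb (le_refl _)
      _ = 2 * γ * Real.sqrt ((p:ℝ)/m) + 3 * (r/sb) := by rw [← hfinal]; ring
  -- finish
  show (∫ ω, ℓ (f ω.1) ω.2 ∂D) ≤ (1 / (m : ℝ)) * ∑ i, ℓ (f (S i).1) (S i).2 +
      2 * γ * Real.sqrt ((p : ℝ) / m) + 3 * Real.sqrt (Real.log (2 / δ) / (2 * m))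
  have hsqrtdiv : Real.sqrt (Real.log (2/δ) / (2*(m:ℝ))) = r / sb := by
    rw [hrdef, hsbdef, Real.sqrt_div hL0.le]
  rw [hint1, hemp, hsqrtdiv]
  have hexpand : ∑ e : Fin p × Bool, ν e * H e
      - (1/(m:ℝ)) * ∑ e : Fin p × Bool, (Ne e : ℝ) * H e
      = ∑ e : Fin p × Bool, H e * Δ e := by
    rw [Finset.mul_sum, ← Finset.sum_sub_distrib]
    apply Finset.sum_congr rfl
    intro e _
    rw [hΔdef]
    field_simp
  linarith [hkey, hexpand]
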